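/- If G is a chordal claw-free graph, then Δ(G) ≤ 3ω(G), and consequently χ⃗(G) ≤ 3ω(G). -/

import Mathlib

open SimpleGraph

/-- An orientation of a simple graph `G`: each edge gets exactly one direction.
`dir u v = true` means the edge `uv` is oriented from `u` toward `v` (head `v`). -/
structure Orient {V : Type*} (G : SimpleGraph V) where
  dir : V → V → Bool
  adj_of_dir : ∀ u v, dir u v = true → G.Adj u v
  dir_iff : ∀ u v, G.Adj u v → (dir u v = true ↔ ¬ dir v u = true)

/-- The indegree of a vertex in an orientation. -/
def Orient.inDeg {V : Type*} [Fintype V] {G : SimpleGraph V} (D : Orient G) (v : V) : ℕ :=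
  (Finset.univ.filter (fun u => D.dir u v = true)).card

/-- An orientation is proper if adjacent vertices have distinct indegrees. -/
def Orient.Proper {V : Type*} [Fintype V] {G : SimpleGraph V} (D : Orient G) : Prop :=
  ∀ u v, G.Adj u v → D.inDeg u ≠ D.inDeg v

/-- The proper orientation number: the least `k` such that `G` admits a proper
`k`-orientation (an orientation with all indegrees at most `k`). -/
noncomputable def properOrientNum {V : Type*} [Fintype V] (G : SimpleGraph V) : ℕ :=
  sInf {k | ∃ D : Orient G, D.Proper ∧ ∀ v, D.inDeg v ≤ k}

/-- A graph is chordal if it has no induced cycle of length at least `4`. -/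
def IsChordal {V : Type*} (G : SimpleGraph V) : Prop :=
  ∀ n, 4 ≤ n → IsEmpty (cycleGraph n ↪g G)

/-- A graph is claw-free if it has no induced `K_{1,3}`. -/
def IsClawFree {V : Type*} (G : SimpleGraph V) : Prop :=
  IsEmpty (completeBipartiteGraph (Fin 1) (Fin 3) ↪g G)

open Finset in
lemma claw_helper {V : Type*} (G : SimpleGraph V) (hclaw : IsClawFree G) {v a b c : V}
    (hva : G.Adj v a) (hvb : G.Adj v b) (hvc : G.Adj v c)
    (hab : ¬ G.Adj a b) (hac : ¬ G.Adj a c) (hbc : ¬ G.Adj b c)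
    (nab : a ≠ b) (nac : a ≠ c) (nbc : b ≠ c) : False := by
  refine hclaw.elim ⟨⟨Sum.elim (fun _ => v) ![a, b, c], ?_⟩, ?_⟩
  · rintro (i | i) (j | j) h
    · exact congrArg Sum.inl (Subsingleton.elim i j)
    · exfalso; fin_cases j <;> simp_all <;>
        first
        | exact hva.ne h
        | exact hvb.ne h
        | exact hvc.ne h
    · exfalso; fin_cases i <;> simp_all <;>
        first
        | exact hva.ne h.symm
        | exact hvb.ne h.symm
        | exact hvc.ne h.symm
    · congr 1
      fin_cases i <;> fin_cases j <;> simp_all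
  · have hba : ¬ G.Adj b a := fun h => hab h.symm
    have hca : ¬ G.Adj c a := fun h => hac h.symm
    have hcb : ¬ G.Adj c b := fun h => hbc h.symm
    intro i j
    change G.Adj (Sum.elim (fun _ => v) ![a, b, c] i) (Sum.elim (fun _ => v) ![a, b, c] j) ↔ _
    revert i j
    rintro (i | i) (j | j)
    · simp
    · fin_cases j <;> simp [hva, hvb, hvc]
    · fin_cases i <;> simp [hva.symm, hvb.symm, hvc.symm]
    · fin_cases i <;> fin_cases j <;> simp_all

open Finset in
lemma c4_helper {V : Type*} (G : SimpleGraph V) (hch : IsChordal G) {u p x q : V}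
    (hup : G.Adj u p) (hpx : G.Adj p x) (hxq : G.Adj x q) (hqu : G.Adj q u)
    (hux : ¬ G.Adj u x) (hpq : ¬ G.Adj p q) (nux : u ≠ x) (npq : p ≠ q) : False := by
  have hpu : G.Adj p u := hup.symm
  have hxp : G.Adj x p := hpx.symm
  have hqx : G.Adj q x := hxq.symm
  have huq : G.Adj u q := hqu.symm
  have hxu : ¬ G.Adj x u := fun h => hux h.symm
  have hqp : ¬ G.Adj q p := fun h => hpq h.symm
  have nxu : x ≠ u := nux.symm
  have nqp : q ≠ p := npq.symm
  refine (hch 4 (by norm_num)).elim ⟨⟨![u, p, x, q], ?_⟩, ?_⟩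
  · intro i j h
    fin_cases i <;> fin_cases j <;> simp_all <;>
      first
      | rfl
      | exact hup.ne h
      | exact hpx.ne h
      | exact hxq.ne h
      | exact hqu.ne h
      | exact hpu.ne h
      | exact hxp.ne h
      | exact hqx.ne h
      | exact huq.ne h
  · intro i j
    change G.Adj (![u, p, x, q] i) (![u, p, x, q] j) ↔ _
    fin_cases i <;> fin_cases j <;>
      simp_all [cycleGraph_adj] <;> decide

open Finset in
lemma exists_good_orient {V : Type*} [Fintype V] (G : SimpleGraph V) [DecidableRel G.Adj]
    (s : Finset V) : ∃ D : V → V → Bool,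
    (∀ u v, D u v = true → G.Adj u v ∧ u ∈ s ∧ v ∈ s) ∧
    (∀ u v, G.Adj u v → u ∈ s → v ∈ s → (D u v = true ↔ ¬ D v u = true)) ∧
    (∀ v ∈ s, (Finset.univ.filter (fun a => D a v = true)).card
        ≤ (s.filter (fun b => G.Adj v b)).card) ∧
    (∀ u ∈ s, ∀ v ∈ s, G.Adj u v →
      (Finset.univ.filter (fun a => D a u = true)).card
        ≠ (Finset.univ.filter (fun a => D a v = true)).card) := by
  classical
  induction s using Finset.strongInduction with
  | _ s ih =>
  rcases s.eq_empty_or_nonempty with rfl | hne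
  · refine ⟨fun _ _ => false, by simp, ?_, by simp, by simp⟩
    intro u v _ hu
    exact absurd hu (notMem_empty _)
  · obtain ⟨w, hw, hmax⟩ := s.exists_max_image (fun b => (s.filter (fun c => G.Adj b c)).card) hne
    obtain ⟨D', h1', h2', h3', h4'⟩ := ih (s.erase w) (erase_ssubset hw)
    set D : V → V → Bool :=
      fun a b => if b = w then decide (a ∈ s.erase w ∧ G.Adj a w) else D' a b with hD
    have hDw : (Finset.univ.filter (fun a => D a w = true))
        = (s.erase w).filter (fun a => G.Adj a w) := by
      ext a
      simp [hD]
    have hDv : ∀ v, v ≠ w → (Finset.univ.filter (fun a => D a v = true))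
        = (Finset.univ.filter (fun a => D' a v = true)) := by
      intro v hv
      ext a
      simp [hD, hv]
    have hwcard : ((s.erase w).filter (fun a => G.Adj a w)).card
        = (s.filter (fun c => G.Adj w c)).card := by
      congr 1
      ext a
      simp only [mem_filter, mem_erase]
      constructor
      · rintro ⟨⟨_, ha⟩, hadj⟩
        exact ⟨ha, hadj.symm⟩
      · rintro ⟨ha, hadj⟩
        exact ⟨⟨hadj.ne', ha⟩, hadj.symm⟩
    have hD'w : ∀ b, D' w b = false := by
      intro b
      by_contra h
      have := (h1' w b (by simpa using h)).2.1
      simp at this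
    -- strict bound for neighbors of w in s.erase w
    have hstrict : ∀ u ∈ s.erase w, G.Adj u w →
        (Finset.univ.filter (fun a => D' a u = true)).card
          < (s.filter (fun c => G.Adj w c)).card := by
      intro u hu hadj
      have h3u := h3' u hu
      have hsub : (s.erase w).filter (fun b => G.Adj u b)
          = (s.filter (fun b => G.Adj u b)).erase w := by
        ext a
        simp only [mem_filter, mem_erase]
        tauto
      have hwmem : w ∈ s.filter (fun b => G.Adj u b) := by
        simp [hw, hadj]
      have hlt : ((s.erase w).filter (fun b => G.Adj u b)).card
          < (s.filter (fun b => G.Adj u b)).card := by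
        rw [hsub, card_erase_of_mem hwmem]
        exact Nat.sub_lt (card_pos.2 ⟨w, hwmem⟩) one_pos
      exact lt_of_le_of_lt h3u hlt |>.trans_le (hmax u (mem_of_mem_erase hu))
    refine ⟨D, ?_, ?_, ?_, ?_⟩
    · intro a b h
      by_cases hb : b = w
      · subst hb
        simp only [hD, if_pos rfl, decide_eq_true_eq] at h
        exact ⟨h.2, mem_of_mem_erase h.1, hw⟩
      · simp only [hD, if_neg hb] at h
        obtain ⟨hadj, ha, hbm⟩ := h1' a b h
        exact ⟨hadj, mem_of_mem_erase ha, mem_of_mem_erase hbm⟩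
    · intro a b hadj ha hb
      by_cases hb' : b = w
      · rw [hb'] at hadj hb ⊢
        have hna : a ≠ w := hadj.ne
        have hDaw : D a w = true := by simp [hD, mem_erase, hna, ha, hadj]
        have hDwa : D w a = false := by simp [hD, hna, hD'w a]
        simp [hDaw, hDwa]
      · by_cases ha' : a = w
        · rw [ha'] at hadj ha ⊢
          have hnb : b ≠ w := hadj.ne'
          have hDwb : D w b = false := by simp [hD, hb', hD'w b]
          have hDbw : D b w = true := by simp [hD, mem_erase, hnb, hb, hadj.symm]
          simp [hDwb, hDbw]
        · simp only [hD, if_neg hb', if_neg ha']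
          exact h2' a b hadj (mem_erase.2 ⟨ha', ha⟩) (mem_erase.2 ⟨hb', hb⟩)
    · intro v hv
      by_cases hv' : v = w
      · subst hv'
        rw [hDw, hwcard]
      · rw [hDv v hv']
        refine le_trans (h3' v (mem_erase.2 ⟨hv', hv⟩)) ?_
        exact card_le_card (filter_subset_filter _ (erase_subset _ _))
    · intro a ha b hb hadj
      by_cases hb' : b = w
      · rw [hb'] at hadj ⊢
        have hae : a ∈ s.erase w := mem_erase.2 ⟨hadj.ne, ha⟩
        rw [hDw, hwcard, hDv a hadj.ne]
        exact Nat.ne_of_lt (hstrict a hae hadj)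
      · by_cases ha' : a = w
        · rw [ha'] at hadj ⊢
          have hbe : b ∈ s.erase w := mem_erase.2 ⟨hb', hb⟩
          rw [hDw, hwcard, hDv b hb']
          exact (Nat.ne_of_lt (hstrict b hbe hadj.symm)).symm
        · rw [hDv a ha', hDv b hb']
          exact h4' a (mem_erase.2 ⟨ha', ha⟩) b (mem_erase.2 ⟨hb', hb⟩) hadj

open Finset in
lemma degree_le_bound {V : Type*} [Fintype V] (G : SimpleGraph V) [DecidableRel G.Adj]
    (hch : IsChordal G) (hclaw : IsClawFree G) (v : V) :
    G.degree v ≤ 3 * G.cliqueNum := by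
  classical
  by_cases hex : ∃ u ∈ G.neighborFinset v, ∃ x ∈ G.neighborFinset v, ¬ G.Adj u x ∧ u ≠ x
  · obtain ⟨u, hu, x, hx, hux, nux⟩ := hex
    rw [mem_neighborFinset] at hu hx
    set A := G.neighborFinset v with hA
    set P := A.filter (fun p => ¬ G.Adj x p ∧ p ≠ x) with hPdef
    set Q := A.filter (fun p => ¬ G.Adj u p ∧ p ≠ u) with hQdef
    set R := A.filter (fun p => G.Adj u p ∧ G.Adj x p) with hRdef
    have memA : ∀ {a : V}, a ∈ A → G.Adj v a := fun h => (mem_neighborFinset _ _ _).1 h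
    have hP : G.IsClique (P : Set V) := by
      intro p hp q hq hpq
      simp only [coe_filter, Set.mem_setOf_eq, hPdef] at hp hq
      obtain ⟨hpA, hxp, npx⟩ := hp
      obtain ⟨hqA, hxq, nqx⟩ := hq
      by_contra hnadj
      exact claw_helper G hclaw hx (memA hpA) (memA hqA) hxp hxq hnadj
        (Ne.symm npx) (Ne.symm nqx) hpq
    have hQ : G.IsClique (Q : Set V) := by
      intro p hp q hq hpq
      simp only [coe_filter, Set.mem_setOf_eq, hQdef] at hp hq
      obtain ⟨hpA, hup', npu⟩ := hp
      obtain ⟨hqA, huq', nqu⟩ := hq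
      by_contra hnadj
      exact claw_helper G hclaw hu (memA hpA) (memA hqA) hup' huq' hnadj
        (Ne.symm npu) (Ne.symm nqu) hpq
    have hR : G.IsClique (R : Set V) := by
      intro p hp q hq hpq
      simp only [coe_filter, Set.mem_setOf_eq, hRdef] at hp hq
      obtain ⟨hpA, hup', hxp⟩ := hp
      obtain ⟨hqA, huq', hxq⟩ := hq
      by_contra hnadj
      exact c4_helper G hch hup' hxp.symm hxq huq'.symm hux hnadj nux hpq
    have hcover : A ⊆ P ∪ Q ∪ R := by
      intro a ha
      simp only [mem_union, hPdef, hQdef, hRdef, mem_filter]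
      by_cases hax : a = x
      · subst hax
        exact Or.inl (Or.inr ⟨ha, hux, nux.symm⟩)
      · by_cases h1 : G.Adj x a
        · by_cases h2 : G.Adj u a
          · exact Or.inr ⟨ha, h2, h1⟩
          · refine Or.inl (Or.inr ⟨ha, h2, ?_⟩)
            rintro rfl
            exact hux h1.symm
        · exact Or.inl (Or.inl ⟨ha, h1, hax⟩)
    have hPc : P.card ≤ G.cliqueNum := IsClique.card_le_cliqueNum (tc := hP)
    have hQc : Q.card ≤ G.cliqueNum := IsClique.card_le_cliqueNum (tc := hQ)
    have hRc : R.card ≤ G.cliqueNum := IsClique.card_le_cliqueNum (tc := hR)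
    calc G.degree v = A.card := rfl
      _ ≤ (P ∪ Q ∪ R).card := card_le_card hcover
      _ ≤ P.card + Q.card + R.card :=
          le_trans (card_union_le _ _) (by gcongr; exact card_union_le _ _)
      _ ≤ 3 * G.cliqueNum := by omega
  · push_neg at hex
    have hclique : G.IsClique ((G.neighborFinset v : Set V)) := by
      intro p hp q hq hpq
      by_contra h
      exact hpq (hex p (by exact_mod_cast hp) q (by exact_mod_cast hq) h)
    have := IsClique.card_le_cliqueNum (tc := hclique)
    calc G.degree v = (G.neighborFinset v).card := rfl
      _ ≤ G.cliqueNum := this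
      _ ≤ 3 * G.cliqueNum := by omega

open Finset in
/-- If `G` is a chordal claw-free graph, then `Δ(G) ≤ 3ω(G)` and hence
`χ⃗(G) ≤ 3ω(G)`. -/
theorem chordal_clawFree_bound {V : Type*} [Fintype V] (G : SimpleGraph V)
    [DecidableRel G.Adj] (hchordal : IsChordal G) (hclaw : IsClawFree G) :
    G.maxDegree ≤ 3 * G.cliqueNum ∧ properOrientNum G ≤ 3 * G.cliqueNum := by
  have hdeg : ∀ v, G.degree v ≤ 3 * G.cliqueNum := degree_le_bound G hchordal hclaw
  refine ⟨G.maxDegree_le_of_forall_degree_le _ hdeg, ?_⟩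
  obtain ⟨D, h1, h2, h3, h4⟩ := exists_good_orient G (Finset.univ : Finset V)
  have hfil : ∀ v : V, (Finset.univ.filter (fun b => G.Adj v b)) = G.neighborFinset v := by
    intro v
    ext b
    simp [mem_neighborFinset]
  refine Nat.sInf_le ⟨⟨D, fun u v h => (h1 u v h).1,
      fun u v h => h2 u v h (mem_univ _) (mem_univ _)⟩, ?_, ?_⟩
  · intro u v hadj
    exact h4 u (mem_univ _) v (mem_univ _) hadj
  · intro v
    have := h3 v (mem_univ _)
    rw [hfil v] at this
    exact le_trans this (hdeg v)
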